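/- arXiv:2310.13331 — 3 statements merged into one kernel-verified Lean document; each statement's English description precedes it below -/
import Mathlib

section
/- The matrix-valued function L(z,λ) = [[1,0],[λ^{-1} log(z/2), 1]] · [[y_0, λ z (y_0)_z],[ (1/4) y_1, y_0 + (λ z/4) (y_1)_z]] satisfies L^{-1} dL = λ^{-1} [[0, z^3],[z^{-1}, 0]] dz on ℂ − (−∞, 0]. -/
open Complex Matrix Metric

private def GoodC (a : ℕ → ℂ) : Prop := ∀ s : ℝ, 0 ≤ s → Summable fun j => ‖a j‖ * s ^ j

private noncomputable def ac (lam : ℂ) (j : ℕ) : ℂ :=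
  lam⁻¹ ^ (2*j) / (16^j * ((Nat.factorial j : ℂ))^2)

private noncomputable def bc (lam : ℂ) (j : ℕ) : ℂ :=
  (-2) * lam⁻¹ * ((harmonic j : ℚ) : ℂ) * ac lam j

private lemma keySummable (a : ℕ → ℂ) (m : ℕ → ℕ) (hm : ∀ j, m j ≤ 4*j + 4)
    (ha : GoodC a) (z : ℂ) :
    Summable fun j => a j * z ^ (m j) := by
  set R : ℝ := max ‖z‖ 1 with hR
  have hR1 : (1:ℝ) ≤ R := le_max_right _ _
  have hRz : ‖z‖ ≤ R := le_max_left _ _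
  have hR0 : (0:ℝ) ≤ R := le_trans zero_le_one hR1
  refine Summable.of_norm_bounded (g := fun j => R^4 * (‖a j‖ * (R^4)^j))
    (((ha (R^4) (by positivity)).mul_left _)) ?_
  intro j
  rw [norm_mul, norm_pow]
  calc ‖a j‖ * ‖z‖ ^ (m j) ≤ ‖a j‖ * R ^ (4*j+4) := by
        gcongr
        calc ‖z‖ ^ m j ≤ R ^ m j := by gcongr
        _ ≤ R ^ (4*j+4) := by exact pow_le_pow_right₀ hR1 (hm j)
    _ = R^4 * (‖a j‖ * (R^4)^j) := by rw [← pow_mul]; ring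

private lemma keyHasDeriv (a : ℕ → ℂ) (m : ℕ → ℕ) (hm : ∀ j, m j ≤ 4*j + 4)
    (ha : GoodC a) (z : ℂ) :
    HasDerivAt (fun w => ∑' j, a j * w ^ m j) (∑' j, a j * (m j * z ^ (m j - 1))) z := by
  set R : ℝ := max ‖z‖ 1 + 1 with hR
  have hR1 : (1:ℝ) ≤ R := by have := le_max_right ‖z‖ 1; linarith
  have hRz : ‖z‖ < R := by have := le_max_left ‖z‖ 1; linarith
  have hR0 : (0:ℝ) ≤ R := le_trans zero_le_one hR1
  have hu : Summable (fun j => (2*R)^4 * (‖a j‖ * ((2*R)^4)^j)) :=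
    (ha ((2*R)^4) (by positivity)).mul_left _
  refine hasDerivAt_tsum_of_isPreconnected hu isOpen_ball
    (convex_ball (0:ℂ) R).isPreconnected
    (g := fun j w => a j * w ^ m j) (g' := fun j w => a j * ((m j : ℂ) * w ^ (m j - 1))) (y₀ := 0)
    (fun j w _ => (hasDerivAt_pow (m j) w).const_mul (a j)) ?_ ?_ ?_ ?_
  · intro j w hw
    rw [mem_ball, dist_zero_right] at hw
    have hw0 : (0:ℝ) ≤ ‖w‖ := norm_nonneg _
    have hwR : ‖w‖ ≤ R := hw.le
    rw [norm_mul, norm_mul, norm_pow, Complex.norm_natCast]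
    have h1 : (m j : ℝ) ≤ 2 ^ (4*j+4) := by
      calc (m j : ℝ) ≤ (4*j+4 : ℕ) := by exact_mod_cast hm j
        _ ≤ 2 ^ (4*j+4) := by exact_mod_cast (Nat.lt_two_pow_self (n := _)).le
    have h2 : ‖w‖ ^ (m j - 1) ≤ R ^ (4*j+4) := by
      calc ‖w‖ ^ (m j - 1) ≤ R ^ (m j - 1) := by gcongr
        _ ≤ R ^ (4*j+4) := pow_le_pow_right₀ hR1 (by have := hm j; omega)
    calc ‖a j‖ * ((m j : ℝ) * ‖w‖ ^ (m j - 1)) ≤ ‖a j‖ * (2^(4*j+4) * R^(4*j+4)) := by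
          gcongr
      _ = (2*R)^4 * (‖a j‖ * ((2*R)^4)^j) := by
          rw [← mul_pow, ← pow_mul]; ring
  · exact mem_ball_self (by linarith)
  · refine Summable.of_norm_bounded (g := fun j => ‖a j‖ * 1 ^ j) (ha 1 zero_le_one) ?_
    intro j
    rw [norm_mul, norm_pow, norm_zero]
    simp only [one_pow]
    rcases Nat.eq_zero_or_pos (m j) with h | h
    · simp [h]
    · simp [zero_pow (Nat.pos_iff_ne_zero.mp h)]
  · rwa [mem_ball, dist_zero_right]

private lemma harmonic_le_self (n : ℕ) : (harmonic n : ℚ) ≤ n := by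
  induction n with
  | zero => simp [harmonic_zero]
  | succ n ih =>
    rw [harmonic_succ]
    push_cast
    have h1 : ((n:ℚ)+1)⁻¹ ≤ 1 := by
      rw [inv_le_one_iff₀]; right; linarith [Nat.cast_nonneg (α := ℚ) n]
    linarith

private lemma harmonic_nonneg' (n : ℕ) : (0:ℚ) ≤ harmonic n := by
  cases n with
  | zero => simp [harmonic_zero]
  | succ n => exact (harmonic_pos n.succ_ne_zero).le

private lemma good_mono (a b : ℕ → ℂ) (K : ℝ) (h : ∀ j, ‖b j‖ ≤ K * (2^j * ‖a j‖))
    (ha : GoodC a) : GoodC b := by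
  intro s hs
  refine Summable.of_nonneg_of_le (fun j => by positivity) (fun j => ?_)
    ((ha (2*s) (by positivity)).mul_left K)
  calc ‖b j‖ * s^j ≤ (K * (2^j * ‖a j‖)) * s^j := by
        have hsj : (0:ℝ) ≤ s^j := by positivity
        exact mul_le_mul_of_nonneg_right (h j) hsj
    _ = K * (‖a j‖ * (2*s)^j) := by rw [mul_pow]; ring

private lemma good_ac (lam : ℂ) : GoodC (ac lam) := by
  intro s hs
  have hx : (0:ℝ) ≤ ‖lam⁻¹‖^2 * s / 16 := by positivity
  refine Summable.of_nonneg_of_le (fun j => by positivity) (fun j => ?_)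
    (Real.summable_pow_div_factorial (‖lam⁻¹‖^2 * s / 16))
  have hf1 : (1:ℝ) ≤ (Nat.factorial j : ℝ) := by exact_mod_cast (Nat.factorial_pos j)
  have hf0 : (0:ℝ) < (Nat.factorial j : ℝ) := by linarith
  have hnorm : ‖ac lam j‖ = ‖lam⁻¹‖^(2*j) / (16^j * (Nat.factorial j:ℝ)^2) := by
    rw [ac, norm_div, norm_pow, norm_mul, norm_pow, norm_pow, Complex.norm_natCast]
    norm_num
  rw [hnorm]
  calc ‖lam⁻¹‖^(2*j) / (16^j * (Nat.factorial j:ℝ)^2) * s^j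
      = (‖lam⁻¹‖^2 * s / 16)^j / (Nat.factorial j:ℝ)^2 := by
        rw [pow_mul]
        field_simp
        rw [div_pow, mul_pow]; field_simp
    _ ≤ (‖lam⁻¹‖^2 * s / 16)^j / (Nat.factorial j:ℝ) :=
        div_le_div_of_nonneg_left (pow_nonneg hx j) hf0 (by nlinarith)

private lemma good_bc (lam : ℂ) : GoodC (bc lam) := by
  refine good_mono (ac lam) _ (2*‖lam⁻¹‖) (fun j => ?_) (good_ac lam)
  have hH : ‖((harmonic j : ℚ):ℂ)‖ ≤ (j:ℝ) := by
    have : ((harmonic j : ℚ):ℂ) = (((harmonic j : ℚ):ℝ):ℂ) := by push_cast; rfl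
    rw [this, Complex.norm_real, Real.norm_eq_abs, _root_.abs_of_nonneg (by exact_mod_cast harmonic_nonneg' j)]
    exact_mod_cast harmonic_le_self j
  have hj2 : (j:ℝ) ≤ 2^j := by exact_mod_cast (Nat.lt_two_pow_self (n := j)).le
  calc ‖bc lam j‖ = 2 * ‖lam⁻¹‖ * ‖((harmonic j : ℚ):ℂ)‖ * ‖ac lam j‖ := by
        rw [bc, norm_mul, norm_mul, norm_mul]; norm_num
    _ ≤ 2 * ‖lam⁻¹‖ * (2^j) * ‖ac lam j‖ := by
        gcongr
        exact le_trans hH hj2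
    _ = 2*‖lam⁻¹‖ * (2^j * ‖ac lam j‖) := by ring

private lemma good_mul_nat (a : ℕ → ℂ) (c : ℕ → ℕ) (hc : ∀ j, c j ≤ 4*j+4)
    (ha : GoodC a) : GoodC (fun j => a j * ((c j : ℕ) : ℂ)) := by
  refine good_mono a _ 8 (fun j => ?_) ha
  rw [norm_mul, Complex.norm_natCast]
  have h1 : ((c j : ℕ):ℝ) ≤ 8 * 2^j := by
    calc ((c j : ℕ):ℝ) ≤ ((4*j+4 : ℕ):ℝ) := by exact_mod_cast hc j
      _ ≤ 8 * 2^j := by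
          push_cast
          have : (j:ℝ) + 1 ≤ 2^(j+1) := by exact_mod_cast (Nat.lt_two_pow_self (n := j+1)).le
          rw [pow_succ] at this
          linarith
  calc ‖a j‖ * ((c j : ℕ):ℝ) ≤ ‖a j‖ * (8 * 2^j) := by gcongr
    _ = 8 * (2^j * ‖a j‖) := by ring

private lemma fact_ne (j : ℕ) : ((Nat.factorial j : ℂ)) ≠ 0 :=
  Nat.cast_ne_zero.mpr (Nat.factorial_pos j).ne'

private lemma arec (lam : ℂ) (j : ℕ) :
    ac lam (j+1) * (16 * ((j:ℂ)+1)^2) = lam⁻¹^2 * ac lam j := by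
  have h1 := fact_ne j
  have h3 : ((j:ℂ)+1) ≠ 0 := by
    exact_mod_cast (Nat.cast_ne_zero (R := ℂ)).mpr (Nat.succ_ne_zero j)
  unfold ac
  have e : 2*(j+1) = 2*j + 2 := by ring
  rw [e, pow_add, Nat.factorial_succ, pow_succ]
  push_cast
  have h2 : ((16:ℂ))^j ≠ 0 := by norm_num
  generalize lam⁻¹ = mu
  field_simp
  ring

private lemma arec2 (lam : ℂ) (hlam : lam ≠ 0) (j : ℕ) :
    lam * (ac lam (j+1) * (16 * ((j:ℂ)+1)^2)) = lam⁻¹ * ac lam j := by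
  rw [arec lam]
  have hinv : lam * lam⁻¹ = 1 := mul_inv_cancel₀ hlam
  linear_combination (ac lam j * lam⁻¹) * hinv

private lemma brec (lam : ℂ) (hlam : lam ≠ 0) (j : ℕ) :
    8*((j:ℂ)+1) * ac lam (j+1) + 4*lam*((j:ℂ)+1)^2 * bc lam (j+1)
      = lam⁻¹ * bc lam j / 4 := by
  have h3 : ((j:ℂ)+1) ≠ 0 := by
    exact_mod_cast (Nat.cast_ne_zero (R := ℂ)).mpr (Nat.succ_ne_zero j)
  have hinv : lam * lam⁻¹ = 1 := mul_inv_cancel₀ hlam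
  have hjinv : ((j:ℂ)+1) * ((j:ℂ)+1)⁻¹ = 1 := mul_inv_cancel₀ h3
  have hH : ((harmonic (j+1) : ℚ) : ℂ) = ((harmonic j : ℚ) : ℂ) + ((j:ℂ)+1)⁻¹ := by
    rw [harmonic_succ]; push_cast; ring
  have e1 := arec lam j
  unfold bc
  rw [hH]
  set A' := ac lam (j+1)
  set A := ac lam j
  set H := ((harmonic j : ℚ) : ℂ)
  linear_combination (-(H/2)) * e1
    + (-8*((j:ℂ)+1)^2*H*A' - 8*A'*((j:ℂ)+1)^2*((j:ℂ)+1)⁻¹) * hinv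
    + (-8*A'*((j:ℂ)+1)) * hjinv
private noncomputable def fF0 (lam : ℂ) (w : ℂ) : ℂ := ∑' j, ac lam j * w ^ (4*j)
private noncomputable def fF1 (lam : ℂ) (w : ℂ) : ℂ := ∑' j, bc lam j * w ^ (4*j)
private noncomputable def fG0 (lam : ℂ) (w : ℂ) : ℂ :=
  ∑' j, (ac lam j * ((4*j : ℕ):ℂ)) * w ^ (4*j - 1)
private noncomputable def fG1 (lam : ℂ) (w : ℂ) : ℂ :=
  ∑' j, (bc lam j * ((4*j : ℕ):ℂ)) * w ^ (4*j - 1)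
private noncomputable def fH0 (lam : ℂ) (w : ℂ) : ℂ :=
  ∑' j, ((ac lam j * ((4*j : ℕ):ℂ)) * (((4*j - 1 : ℕ)):ℂ)) * w ^ (4*j - 1 - 1)
private noncomputable def fH1 (lam : ℂ) (w : ℂ) : ℂ :=
  ∑' j, ((bc lam j * ((4*j : ℕ):ℂ)) * (((4*j - 1 : ℕ)):ℂ)) * w ^ (4*j - 1 - 1)

private lemma good_ac4 (lam : ℂ) : GoodC (fun j => ac lam j * ((4*j : ℕ):ℂ)) :=
  good_mul_nat (ac lam) _ (fun j => by beta_reduce; omega) (good_ac lam)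
private lemma good_bc4 (lam : ℂ) : GoodC (fun j => bc lam j * ((4*j : ℕ):ℂ)) :=
  good_mul_nat (bc lam) _ (fun j => by beta_reduce; omega) (good_bc lam)
private lemma good_ac41 (lam : ℂ) :
    GoodC (fun j => (ac lam j * ((4*j : ℕ):ℂ)) * (((4*j - 1 : ℕ)):ℂ)) :=
  good_mul_nat _ (fun j => 4*j-1) (fun j => by beta_reduce; omega) (good_ac4 lam)
private lemma good_bc41 (lam : ℂ) :
    GoodC (fun j => (bc lam j * ((4*j : ℕ):ℂ)) * (((4*j - 1 : ℕ)):ℂ)) :=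
  good_mul_nat _ (fun j => 4*j-1) (fun j => by beta_reduce; omega) (good_bc4 lam)

private lemma hasDerivAt_fF0 (lam z : ℂ) : HasDerivAt (fF0 lam) (fG0 lam z) z := by
  have h := keyHasDeriv (ac lam) (fun j => 4*j) (fun j => by beta_reduce; omega) (good_ac lam) z
  have e : (∑' j, ac lam j * (((4*j : ℕ)):ℂ) * z ^ (4*j - 1)) = fG0 lam z := rfl
  simp only [← mul_assoc] at h; exact h

private lemma hasDerivAt_fF1 (lam z : ℂ) : HasDerivAt (fF1 lam) (fG1 lam z) z := by
  have h := keyHasDeriv (bc lam) (fun j => 4*j) (fun j => by beta_reduce; omega) (good_bc lam) z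
  simp only [← mul_assoc] at h; exact h

private lemma hasDerivAt_fG0 (lam z : ℂ) : HasDerivAt (fG0 lam) (fH0 lam z) z := by
  have h := keyHasDeriv (fun j => ac lam j * ((4*j : ℕ):ℂ)) (fun j => 4*j - 1)
    (fun j => by beta_reduce; omega) (good_ac4 lam) z
  simp only [← mul_assoc] at h; exact h

private lemma hasDerivAt_fG1 (lam z : ℂ) : HasDerivAt (fG1 lam) (fH1 lam z) z := by
  have h := keyHasDeriv (fun j => bc lam j * ((4*j : ℕ):ℂ)) (fun j => 4*j - 1)
    (fun j => by beta_reduce; omega) (good_bc4 lam) z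
  simp only [← mul_assoc] at h; exact h

private lemma key1 (lam : ℂ) (hlam : lam ≠ 0) (z : ℂ) :
    lam * fG0 lam z + lam * z * fH0 lam z = lam⁻¹ * z ^ 3 * fF0 lam z := by
  have SA : Summable (fun j => (ac lam j * ((4*j:ℕ):ℂ)) * z ^ (4*j-1)) :=
    keySummable _ (fun j => 4*j-1) (fun j => by beta_reduce; omega) (good_ac4 lam) z
  have SB : Summable (fun j => ((ac lam j * ((4*j:ℕ):ℂ)) * (((4*j-1:ℕ)):ℂ)) * z ^ (4*j-1-1)) :=
    keySummable _ (fun j => 4*j-1-1) (fun j => by beta_reduce; omega) (good_ac41 lam) z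
  have e1 : lam * fG0 lam z = ∑' j, lam * ((ac lam j * ((4*j:ℕ):ℂ)) * z ^ (4*j-1)) :=
    tsum_mul_left.symm
  have e2 : lam * z * fH0 lam z
      = ∑' j, (lam * z) * (((ac lam j * ((4*j:ℕ):ℂ)) * (((4*j-1:ℕ)):ℂ)) * z ^ (4*j-1-1)) :=
    tsum_mul_left.symm
  have e3 : lam⁻¹ * z ^ 3 * fF0 lam z = ∑' j, (lam⁻¹ * z ^ 3) * (ac lam j * z ^ (4*j)) :=
    tsum_mul_left.symm
  rw [e1, e2, e3, ← Summable.tsum_add (SA.mul_left lam) (SB.mul_left (lam * z)),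
    Summable.tsum_eq_zero_add ((SA.mul_left lam).add (SB.mul_left (lam * z)))]
  have h00 : lam * ((ac lam 0 * ((4*0:ℕ):ℂ)) * z ^ (4*0-1))
      + (lam * z) * (((ac lam 0 * ((4*0:ℕ):ℂ)) * (((4*0-1:ℕ)):ℂ)) * z ^ (4*0-1-1)) = 0 := by
    norm_num
  rw [h00, zero_add]
  refine tsum_congr fun j => ?_
  have e4 : 4*(j+1) - 1 = 4*j+3 := by omega
  have e5 : 4*(j+1) - 1 - 1 = 4*j+2 := by omega
  simp only [e4, e5]
  push_cast
  linear_combination (z^(4*j) * z^3) * arec2 lam hlam j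

private lemma key2 (lam : ℂ) (hlam : lam ≠ 0) (z : ℂ) :
    2 * fG0 lam z + lam * (1/4) * fG1 lam z + lam * z * (1/4) * fH1 lam z
      = lam⁻¹ * z ^ 3 * ((1/4) * fF1 lam z) := by
  have S0 : Summable (fun j => (ac lam j * ((4*j:ℕ):ℂ)) * z ^ (4*j-1)) :=
    keySummable _ (fun j => 4*j-1) (fun j => by beta_reduce; omega) (good_ac4 lam) z
  have SA : Summable (fun j => (bc lam j * ((4*j:ℕ):ℂ)) * z ^ (4*j-1)) :=
    keySummable _ (fun j => 4*j-1) (fun j => by beta_reduce; omega) (good_bc4 lam) z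
  have SB : Summable (fun j => ((bc lam j * ((4*j:ℕ):ℂ)) * (((4*j-1:ℕ)):ℂ)) * z ^ (4*j-1-1)) :=
    keySummable _ (fun j => 4*j-1-1) (fun j => by beta_reduce; omega) (good_bc41 lam) z
  have e0 : 2 * fG0 lam z = ∑' j, 2 * ((ac lam j * ((4*j:ℕ):ℂ)) * z ^ (4*j-1)) :=
    tsum_mul_left.symm
  have e1 : lam * (1/4) * fG1 lam z
      = ∑' j, (lam * (1/4)) * ((bc lam j * ((4*j:ℕ):ℂ)) * z ^ (4*j-1)) :=
    tsum_mul_left.symm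
  have e2 : lam * z * (1/4) * fH1 lam z
      = ∑' j, (lam * z * (1/4)) * (((bc lam j * ((4*j:ℕ):ℂ)) * (((4*j-1:ℕ)):ℂ)) * z ^ (4*j-1-1)) :=
    tsum_mul_left.symm
  have e3 : lam⁻¹ * z ^ 3 * ((1/4) * fF1 lam z)
      = ∑' j, (lam⁻¹ * z ^ 3 * (1/4)) * (bc lam j * z ^ (4*j)) := by
    rw [tsum_mul_left]; simp only [fF1]; ring
  have SS1 := (S0.mul_left 2).add (SA.mul_left (lam * (1/4)))
  have SS2 := SS1.add (SB.mul_left (lam * z * (1/4)))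
  rw [e0, e1, e2, e3, ← Summable.tsum_add (S0.mul_left 2) (SA.mul_left (lam * (1/4))),
    ← Summable.tsum_add SS1 (SB.mul_left (lam * z * (1/4))), Summable.tsum_eq_zero_add SS2]
  have h00 : 2 * ((ac lam 0 * ((4*0:ℕ):ℂ)) * z ^ (4*0-1))
      + (lam * (1/4)) * ((bc lam 0 * ((4*0:ℕ):ℂ)) * z ^ (4*0-1))
      + (lam * z * (1/4)) * (((bc lam 0 * ((4*0:ℕ):ℂ)) * (((4*0-1:ℕ)):ℂ)) * z ^ (4*0-1-1)) = 0 := by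
    norm_num
  rw [h00, zero_add]
  refine tsum_congr fun j => ?_
  have e4 : 4*(j+1) - 1 = 4*j+3 := by omega
  have e5 : 4*(j+1) - 1 - 1 = 4*j+2 := by omega
  simp only [e4, e5]
  push_cast
  linear_combination (z^(4*j) * z^3) * brec lam hlam j
/-- The matrix-valued function
`L(z,λ) = [[1,0],[λ⁻¹ log(z/2), 1]] · [[y₀, λ z y₀'],[y₁/4, y₀ + (λ z/4) y₁']]`
satisfies `L⁻¹ dL = λ⁻¹ [[0, z³],[z⁻¹, 0]] dz` on `ℂ − (−∞, 0]`, i.e. the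
(entrywise) matrix ODE `L_z = L · λ⁻¹ [[0,z³],[z⁻¹,0]]`. -/
theorem stmt3 (lam : ℂ) (hlam : lam ≠ 0)
    (y₀ y₁ : ℂ → ℂ)
    (hy₀ : ∀ z : ℂ, y₀ z = ∑' j : ℕ, lam⁻¹ ^ (2 * j) * z ^ (4 * j) /
      (16 ^ j * ((Nat.factorial j : ℂ)) ^ 2))
    (hy₁ : ∀ z : ℂ, y₁ z = (-2) * lam⁻¹ *
      ∑' j : ℕ, ((harmonic (j + 1) : ℚ) : ℂ) * lam⁻¹ ^ (2 * (j + 1)) * z ^ (4 * (j + 1)) /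
        (16 ^ (j + 1) * ((Nat.factorial (j + 1) : ℂ)) ^ 2))
    (L : ℂ → Matrix (Fin 2) (Fin 2) ℂ)
    (hL : ∀ z : ℂ, L z =
      !![(1 : ℂ), 0; lam⁻¹ * Complex.log (z / 2), 1] *
      !![y₀ z, lam * z * deriv y₀ z;
         (1 / 4) * y₁ z, y₀ z + lam * z * (1 / 4) * deriv y₁ z]) :
    ∀ z : ℂ, z ∈ Complex.slitPlane → ∀ i j : Fin 2,
      HasDerivAt (fun w => L w i j)
        ((L z * (lam⁻¹ • !![(0 : ℂ), z ^ 3; z⁻¹, 0])) i j) z := by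
  have hy0f : y₀ = fF0 lam := by
    funext w
    rw [hy₀ w]
    simp only [fF0]
    exact tsum_congr fun j => by rw [ac]; ring
  have hy1f : y₁ = fF1 lam := by
    funext w
    have S : Summable (fun j => bc lam j * w ^ (4*j)) :=
      keySummable _ (fun j => 4*j) (fun j => by beta_reduce; omega) (good_bc lam) w
    have hshift : fF1 lam w = ∑' j, bc lam (j+1) * w ^ (4*(j+1)) := by
      simp only [fF1]
      rw [Summable.tsum_eq_zero_add S]
      simp [bc, harmonic_zero]
    rw [hy₁ w, hshift, ← tsum_mul_left]
    exact tsum_congr fun j => by simp only [bc, ac]; ring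
  have hdy0 : deriv y₀ = fG0 lam := funext fun w => by
    rw [hy0f]; exact (hasDerivAt_fF0 lam w).deriv
  have hdy1 : deriv y₁ = fG1 lam := funext fun w => by
    rw [hy1f]; exact (hasDerivAt_fF1 lam w).deriv
  have hLe : ∀ w, L w = !![fF0 lam w, lam * w * fG0 lam w;
      lam⁻¹ * Complex.log (w/2) * fF0 lam w + (1/4) * fF1 lam w,
      lam⁻¹ * Complex.log (w/2) * (lam * w * fG0 lam w)
        + (fF0 lam w + lam * w * (1/4) * fG1 lam w)] := by
    intro w
    rw [hL w, hdy0, hdy1, hy0f, hy1f, Matrix.mul_fin_two]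
    ext i j
    fin_cases i <;> fin_cases j <;> simp <;> ring
  intro z hz i j
  have hz0 : z ≠ 0 := Complex.slitPlane_ne_zero hz
  have hinvl : lam * lam⁻¹ = 1 := mul_inv_cancel₀ hlam
  have hinvz : z * z⁻¹ = 1 := mul_inv_cancel₀ hz0
  have hz2 : z / 2 ∈ Complex.slitPlane := by
    rw [Complex.mem_slitPlane_iff] at hz ⊢
    have h2re : (z/2).re = z.re/2 := by
      simp [Complex.div_re, Complex.normSq_apply]
    have h2im : (z/2).im = z.im/2 := by
      simp [Complex.div_im, Complex.normSq_apply]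
    rcases hz with h | h
    · exact Or.inl (by rw [h2re]; linarith)
    · exact Or.inr (by rw [h2im]; exact div_ne_zero h two_ne_zero)
  have hdiv : HasDerivAt (fun w : ℂ => w / 2) (1/2) z := by
    simpa using (hasDerivAt_id z).div_const 2
  have hlog : HasDerivAt (fun w : ℂ => Complex.log (w/2)) ((z/2)⁻¹ * (1/2)) z :=
    by have := (Complex.hasDerivAt_log hz2).comp z hdiv; exact this
  have hq : (z/2)⁻¹ * (1/2 : ℂ) = z⁻¹ := by
    field_simp
  -- derivative of each entry
  have d00 : HasDerivAt (fun w => fF0 lam w) (fG0 lam z) z := hasDerivAt_fF0 lam z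
  have d01 : HasDerivAt (fun w => lam * w * fG0 lam w)
      (lam * 1 * fG0 lam z + lam * z * fH0 lam z) z :=
    ((hasDerivAt_id z).const_mul lam).mul (hasDerivAt_fG0 lam z)
  have d10 : HasDerivAt (fun w => lam⁻¹ * Complex.log (w/2) * fF0 lam w + (1/4) * fF1 lam w)
      ((lam⁻¹ * ((z/2)⁻¹ * (1/2))) * fF0 lam z + (lam⁻¹ * Complex.log (z/2)) * fG0 lam z
        + (1/4) * fG1 lam z) z :=
    ((hlog.const_mul lam⁻¹).mul (hasDerivAt_fF0 lam z)).add
      ((hasDerivAt_fF1 lam z).const_mul (1/4))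
  have d11 : HasDerivAt (fun w => lam⁻¹ * Complex.log (w/2) * (lam * w * fG0 lam w)
        + (fF0 lam w + lam * w * (1/4) * fG1 lam w))
      ((lam⁻¹ * ((z/2)⁻¹ * (1/2))) * (lam * z * fG0 lam z)
        + (lam⁻¹ * Complex.log (z/2)) * (lam * 1 * fG0 lam z + lam * z * fH0 lam z)
        + (fG0 lam z + ((lam * 1 * (1/4)) * fG1 lam z + (lam * z * (1/4)) * fH1 lam z))) z := by
    exact ((hlog.const_mul lam⁻¹).mul d01).add
      ((hasDerivAt_fF0 lam z).add
        ((((hasDerivAt_id z).const_mul lam).mul_const (1/4)).mul (hasDerivAt_fG1 lam z)))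
  have k1 := key1 lam hlam z
  have k2 := key2 lam hlam z
  fin_cases i <;> fin_cases j <;>
    simp only [hLe, Matrix.mul_apply, Matrix.smul_apply, Fin.sum_univ_two, smul_eq_mul,
      Fin.isValue, Matrix.cons_val', Matrix.cons_val_zero, Matrix.cons_val_one,
      Matrix.head_cons, Matrix.empty_val', Matrix.cons_val_fin_one, Matrix.head_fin_const,
      Fin.mk_zero, Fin.mk_one, Matrix.of_apply, Matrix.cons_val', mul_zero, zero_mul, add_zero, zero_add, mul_one, one_mul]
  · refine d00.congr_deriv ?_
    linear_combination (-(fG0 lam z * z * z⁻¹)) * hinvl - fG0 lam z * hinvz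
  · refine d01.congr_deriv ?_
    linear_combination k1
  · refine d10.congr_deriv ?_
    linear_combination (lam⁻¹ * fF0 lam z) * hq
      - (lam⁻¹ * Complex.log (z/2) * fG0 lam z + fG1 lam z/4) * (z * z⁻¹) * hinvl
      - (lam⁻¹ * Complex.log (z/2) * fG0 lam z + fG1 lam z/4) * hinvz
  · refine d11.congr_deriv ?_
    linear_combination (lam⁻¹ * lam * z * fG0 lam z) * hq
      + (lam⁻¹ * Complex.log (z/2)) * k1 + k2
      + (fG0 lam z * z * z⁻¹) * hinvl + fG0 lam z * hinvz
end

section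
/- For every λ ∈ ℂ* and z ∈ ℂ − (−∞,0], the matrix L(z,λ) = [[1,0],[λ^{-1} log(z/2),1]] · [[y_0, λ z (y_0)_z],[(1/4) y_1, y_0 + (λ z /4)(y_1)_z]] has determinant 1. -/
open Complex Matrix

namespace Stmt4Aux

noncomputable def aco (α : ℂ) (j : ℕ) : ℂ := α ^ j / (16 ^ j * (j.factorial : ℂ) ^ 2)

noncomputable def bco (lam : ℂ) (j : ℕ) : ℂ :=
  (-2) * lam⁻¹ * ((harmonic (j + 1) : ℚ) : ℂ) * aco (lam⁻¹ ^ 2) (j + 1)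

section analytic

variable {e : ℕ → ℂ} {M K : ℝ}

lemma nat_bnd (m j : ℕ) : ((4 * j + m : ℕ) : ℝ) ≤ (4 + (m : ℝ)) * 2 ^ j := by
  have h : j + 1 ≤ 2 ^ j := (Nat.lt_two_pow_self (n := j))
  have h2 : (4 * j + m : ℕ) ≤ (4 + m) * 2 ^ j := by
    calc 4 * j + m ≤ (4 + m) * (j + 1) := by nlinarith
      _ ≤ (4 + m) * 2 ^ j := Nat.mul_le_mul_left _ h
  exact_mod_cast h2

lemma term_bound (he : ∀ j, ‖e j‖ ≤ M * K ^ j / j.factorial) (m : ℕ) {R : ℝ}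
    (hR : 1 ≤ R) {y : ℂ} (hy : ‖y‖ ≤ R) (j : ℕ) :
    ‖e j * y ^ (4 * j + m)‖ ≤ (M * R ^ m) * ((K * R ^ 4) ^ j / j.factorial) := by
  have h0 : (0:ℝ) ≤ M * K ^ j / j.factorial := le_trans (norm_nonneg _) (he j)
  have h1 : ‖y ^ (4 * j + m)‖ ≤ (R ^ 4) ^ j * R ^ m := by
    rw [norm_pow]
    calc ‖y‖ ^ (4 * j + m) ≤ R ^ (4 * j + m) :=
          pow_le_pow_left₀ (norm_nonneg y) hy _
      _ = (R ^ 4) ^ j * R ^ m := by rw [pow_add, pow_mul]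
  calc ‖e j * y ^ (4 * j + m)‖ = ‖e j‖ * ‖y ^ (4 * j + m)‖ := norm_mul _ _
    _ ≤ (M * K ^ j / j.factorial) * ((R ^ 4) ^ j * R ^ m) :=
        mul_le_mul (he j) h1 (norm_nonneg _) h0
    _ = (M * R ^ m) * ((K * R ^ 4) ^ j / j.factorial) := by
        rw [mul_pow]; ring

lemma deriv_term_bound (he : ∀ j, ‖e j‖ ≤ M * K ^ j / j.factorial) (m : ℕ) {R : ℝ}
    (hR : 1 ≤ R) {y : ℂ} (hy : ‖y‖ ≤ R) (j : ℕ) :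
    ‖e j * ((4 * j + m : ℕ) : ℂ) * y ^ (4 * j + m - 1)‖ ≤
      (M * (4 + (m : ℝ)) * R ^ m) * ((2 * K * R ^ 4) ^ j / j.factorial) := by
  have h0 : (0:ℝ) ≤ M * K ^ j / j.factorial := le_trans (norm_nonneg _) (he j)
  have h1 : ‖y ^ (4 * j + m - 1)‖ ≤ (R ^ 4) ^ j * R ^ m := by
    rw [norm_pow]
    calc ‖y‖ ^ (4 * j + m - 1) ≤ R ^ (4 * j + m - 1) :=
          pow_le_pow_left₀ (norm_nonneg y) hy _
      _ ≤ R ^ (4 * j + m) := pow_le_pow_right₀ hR (Nat.sub_le _ _)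
      _ = (R ^ 4) ^ j * R ^ m := by rw [pow_add, pow_mul]
  have h2 : ‖e j * ((4 * j + m : ℕ) : ℂ)‖ ≤
      (M * K ^ j / j.factorial) * ((4 + (m : ℝ)) * 2 ^ j) := by
    rw [norm_mul, Complex.norm_natCast]
    exact mul_le_mul (he j) (nat_bnd m j) (Nat.cast_nonneg _) h0
  calc ‖e j * ((4 * j + m : ℕ) : ℂ) * y ^ (4 * j + m - 1)‖
      = ‖e j * ((4 * j + m : ℕ) : ℂ)‖ * ‖y ^ (4 * j + m - 1)‖ := norm_mul _ _
    _ ≤ ((M * K ^ j / j.factorial) * ((4 + (m : ℝ)) * 2 ^ j)) * ((R ^ 4) ^ j * R ^ m) := by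
        refine mul_le_mul h2 h1 (norm_nonneg _) ?_
        exact mul_nonneg h0 (by positivity)
    _ = (M * (4 + (m : ℝ)) * R ^ m) * ((2 * K * R ^ 4) ^ j / j.factorial) := by
        rw [mul_pow, mul_pow]; ring

lemma summable_terms (he : ∀ j, ‖e j‖ ≤ M * K ^ j / j.factorial) (m : ℕ) (z : ℂ) :
    Summable fun j => e j * z ^ (4 * j + m) := by
  have hR : (1:ℝ) ≤ ‖z‖ + 1 := by linarith [norm_nonneg z]
  exact Summable.of_norm_bounded
    ((Real.summable_pow_div_factorial (K * (‖z‖ + 1) ^ 4)).mul_left (M * (‖z‖ + 1) ^ m))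
    (term_bound he m hR (by linarith))

lemma summable_deriv_terms (he : ∀ j, ‖e j‖ ≤ M * K ^ j / j.factorial) (m : ℕ) (z : ℂ) :
    Summable fun j => e j * ((4 * j + m : ℕ) : ℂ) * z ^ (4 * j + m - 1) := by
  have hR : (1:ℝ) ≤ ‖z‖ + 1 := by linarith [norm_nonneg z]
  exact Summable.of_norm_bounded
    ((Real.summable_pow_div_factorial (2 * K * (‖z‖ + 1) ^ 4)).mul_left
      (M * (4 + (m : ℝ)) * (‖z‖ + 1) ^ m))
    (deriv_term_bound he m hR (by linarith))

lemma hasDerivAt_series (he : ∀ j, ‖e j‖ ≤ M * K ^ j / j.factorial) (m : ℕ) (z : ℂ) :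
    HasDerivAt (fun w => ∑' j, e j * w ^ (4 * j + m))
      (∑' j, e j * ((4 * j + m : ℕ) : ℂ) * z ^ (4 * j + m - 1)) z := by
  have hR : (1:ℝ) ≤ ‖z‖ + 1 := by linarith [norm_nonneg z]
  have hz : z ∈ Metric.ball (0:ℂ) (‖z‖ + 1) := by
    rw [mem_ball_zero_iff]; linarith
  refine hasDerivAt_tsum_of_isPreconnected
    (u := fun j => (M * (4 + (m : ℝ)) * (‖z‖ + 1) ^ m) *
      ((2 * K * (‖z‖ + 1) ^ 4) ^ j / j.factorial))
    (g := fun j w => e j * w ^ (4 * j + m))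
    (g' := fun j y => e j * ((4 * j + m : ℕ) : ℂ) * y ^ (4 * j + m - 1))
    ((Real.summable_pow_div_factorial _).mul_left _)
    Metric.isOpen_ball ((convex_ball (0:ℂ) _).isPreconnected) ?_ ?_ hz ?_ hz
  · intro j y _
    simpa [mul_assoc] using (hasDerivAt_pow (4 * j + m) y).const_mul (e j)
  · intro j y hy
    exact deriv_term_bound he m hR (le_of_lt (mem_ball_zero_iff.1 hy)) j
  · exact summable_terms he m z

lemma shift_bound (he : ∀ j, ‖e j‖ ≤ M * K ^ j / j.factorial) :
    ∀ j, ‖e (j + 1)‖ ≤ (M * K) * K ^ j / j.factorial := by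
  intro j
  have h0 : (0:ℝ) ≤ M * K ^ (j + 1) / (j + 1).factorial :=
    le_trans (norm_nonneg _) (he (j + 1))
  have h0' : (0:ℝ) ≤ M * K ^ (j + 1) := by
    by_contra h
    push_neg at h
    have : M * K ^ (j + 1) / (j + 1).factorial < 0 :=
      div_neg_of_neg_of_pos h (by positivity)
    linarith
  calc ‖e (j + 1)‖ ≤ M * K ^ (j + 1) / (j + 1).factorial := he (j + 1)
    _ ≤ M * K ^ (j + 1) / j.factorial := by
        apply div_le_div_of_nonneg_left h0' (by positivity)
        exact_mod_cast Nat.factorial_le (Nat.le_succ j)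
    _ = (M * K) * K ^ j / j.factorial := by rw [pow_succ]; ring

lemma mullin_bound (he : ∀ j, ‖e j‖ ≤ M * K ^ j / j.factorial) (m : ℕ) :
    ∀ j, ‖e j * ((4 * j + m : ℕ) : ℂ)‖ ≤ (M * (4 + (m : ℝ))) * (2 * K) ^ j / j.factorial := by
  intro j
  have h0 : (0:ℝ) ≤ M * K ^ j / j.factorial := le_trans (norm_nonneg _) (he j)
  calc ‖e j * ((4 * j + m : ℕ) : ℂ)‖ = ‖e j‖ * ((4 * j + m : ℕ) : ℝ) := by
        rw [norm_mul, Complex.norm_natCast]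
    _ ≤ (M * K ^ j / j.factorial) * ((4 + (m : ℝ)) * 2 ^ j) :=
        mul_le_mul (he j) (nat_bnd m j) (Nat.cast_nonneg _) h0
    _ = (M * (4 + (m : ℝ))) * (2 * K) ^ j / j.factorial := by
        rw [mul_pow]; ring

end analytic

lemma aco_bound (α : ℂ) : ∀ j, ‖aco α j‖ ≤ 1 * (‖α‖ / 16) ^ j / j.factorial := by
  intro j
  have hf : (0:ℝ) < (j.factorial : ℝ) := by positivity
  have : ‖aco α j‖ = ‖α‖ ^ j / (16 ^ j * (j.factorial : ℝ) ^ 2) := by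
    simp [aco, norm_div, norm_pow, norm_mul, Complex.norm_natCast]
  rw [this, one_mul, div_pow, div_div]
  apply div_le_div_of_nonneg_left (by positivity) (by positivity)
  have hf1 : (1:ℝ) ≤ (j.factorial : ℝ) := by
    exact_mod_cast Nat.one_le_iff_ne_zero.2 j.factorial_ne_zero
  have : (j.factorial : ℝ) ≤ (j.factorial : ℝ) ^ 2 := by nlinarith
  nlinarith [pow_pos (show (0:ℝ) < 16 by norm_num) j]

lemma harm_le : ∀ n : ℕ, harmonic n ≤ (n : ℚ) := by
  intro n
  induction n with
  | zero => simp
  | succ n ih =>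
    rw [harmonic_succ]
    have h1 : ((n:ℚ) + 1)⁻¹ ≤ 1 :=
      inv_le_one_of_one_le₀ (by exact_mod_cast Nat.le_add_left 1 n)
    push_cast
    linarith

lemma norm_harm_le (j : ℕ) : ‖((harmonic (j + 1) : ℚ) : ℂ)‖ ≤ (2:ℝ) * 2 ^ j := by
  have h1 : (0:ℚ) ≤ harmonic (j + 1) := (harmonic_pos (Nat.succ_ne_zero j)).le
  have h2 : harmonic (j + 1) ≤ ((j : ℚ) + 1) := by
    have := harm_le (j + 1); push_cast at this ⊢; linarith
  have h3 : ((j:ℝ) + 1) ≤ 2 * 2 ^ j := by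
    have : j + 1 ≤ 2 ^ j := (Nat.lt_two_pow_self (n := j))
    have : ((j:ℝ) + 1) ≤ 2 ^ j := by exact_mod_cast this
    nlinarith [pow_pos (show (0:ℝ) < 2 by norm_num) j]
  rw [Complex.norm_ratCast,
    _root_.abs_of_nonneg (show (0:ℝ) ≤ ((harmonic (j + 1) : ℚ) : ℝ) by exact_mod_cast h1)]
  calc ((harmonic (j+1) : ℚ) : ℝ) ≤ ((j:ℝ) + 1) := by exact_mod_cast h2
    _ ≤ 2 * 2 ^ j := h3

lemma bco_bound (lam : ℂ) :
    ∀ j, ‖bco lam j‖ ≤ (4 * ‖lam⁻¹‖ * (‖lam⁻¹ ^ 2‖ / 16)) *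
      (2 * (‖lam⁻¹ ^ 2‖ / 16)) ^ j / j.factorial := by
  intro j
  set K : ℝ := ‖lam⁻¹ ^ 2‖ / 16 with hK
  have hK0 : 0 ≤ K := by positivity
  have ha : ‖aco (lam⁻¹ ^ 2) (j + 1)‖ ≤ K * K ^ j / j.factorial := by
    have h := shift_bound (aco_bound (lam⁻¹ ^ 2)) j
    rw [← hK] at h
    simpa only [one_mul] using h
  have hnorm : ‖bco lam j‖ =
      2 * ‖lam⁻¹‖ * ‖((harmonic (j + 1) : ℚ) : ℂ)‖ * ‖aco (lam⁻¹ ^ 2) (j + 1)‖ := by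
    simp only [bco, norm_mul, norm_neg]
    norm_num
  rw [hnorm]
  calc 2 * ‖lam⁻¹‖ * ‖((harmonic (j + 1) : ℚ) : ℂ)‖ * ‖aco (lam⁻¹ ^ 2) (j + 1)‖
      ≤ 2 * ‖lam⁻¹‖ * (2 * 2 ^ j) * (K * K ^ j / j.factorial) := by
        apply mul_le_mul _ ha (norm_nonneg _) (by positivity)
        apply mul_le_mul_of_nonneg_left (norm_harm_le j) (by positivity)
    _ = (4 * ‖lam⁻¹‖ * K) * (2 * K) ^ j / j.factorial := by
        rw [mul_pow]; ring

lemma aco_rec (α : ℂ) (j : ℕ) :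
    16 * ((j : ℂ) + 1) ^ 2 * aco α (j + 1) = α * aco α j := by
  have hfac : ((j.factorial : ℂ)) ≠ 0 := Nat.cast_ne_zero.2 j.factorial_ne_zero
  have hj1 : ((j : ℂ) + 1) ≠ 0 := by
    have := Nat.cast_add_one_ne_zero (R := ℂ) j
    exact_mod_cast this
  have h16 : ((16:ℂ)) ^ j ≠ 0 := pow_ne_zero _ (by norm_num)
  simp only [aco, pow_succ, Nat.factorial_succ]
  push_cast
  field_simp

lemma bco_rec (lam : ℂ) (j : ℕ) :
    16 * ((j : ℂ) + 2) ^ 2 * bco lam (j + 1) +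
      32 * lam⁻¹ * ((j : ℂ) + 2) * aco (lam⁻¹ ^ 2) (j + 2) = lam⁻¹ ^ 2 * bco lam j := by
  have hj2 : ((j : ℂ) + 2) ≠ 0 := by
    have : ((j : ℂ) + 2) = ((j + 1 : ℕ) : ℂ) + 1 := by push_cast; ring
    rw [this]
    exact_mod_cast Nat.cast_add_one_ne_zero (R := ℂ) (j + 1)
  have hc : ((j : ℂ) + 2) * ((j : ℂ) + 2)⁻¹ = 1 := mul_inv_cancel₀ hj2
  have hH : ((harmonic (j + 2) : ℚ) : ℂ) = ((harmonic (j + 1) : ℚ) : ℂ) + ((j : ℂ) + 2)⁻¹ := by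
    rw [harmonic_succ]
    push_cast
    ring
  have ha := aco_rec (lam⁻¹ ^ 2) (j + 1)
  push_cast at ha
  simp only [bco]
  rw [hH]
  linear_combination (-2 * lam⁻¹ * ((harmonic (j + 1) : ℚ) : ℂ)) * ha +
    (-32 * lam⁻¹ * ((j : ℂ) + 2) * aco (lam⁻¹ ^ 2) (j + 1 + 1)) * hc

noncomputable def Af (α : ℂ) (z : ℂ) : ℂ := ∑' j, aco α j * z ^ (4 * j)
noncomputable def Adf (α : ℂ) (z : ℂ) : ℂ :=
  ∑' j, aco α (j + 1) * ((4 * j + 4 : ℕ) : ℂ) * z ^ (4 * j + 3)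
noncomputable def Addf (α : ℂ) (z : ℂ) : ℂ :=
  ∑' j, aco α (j + 1) * ((4 * j + 4 : ℕ) : ℂ) * ((4 * j + 3 : ℕ) : ℂ) * z ^ (4 * j + 2)
noncomputable def Bf (lam : ℂ) (z : ℂ) : ℂ := ∑' j, bco lam j * z ^ (4 * j + 4)
noncomputable def Bdf (lam : ℂ) (z : ℂ) : ℂ :=
  ∑' j, bco lam j * ((4 * j + 4 : ℕ) : ℂ) * z ^ (4 * j + 3)
noncomputable def Bddf (lam : ℂ) (z : ℂ) : ℂ :=
  ∑' j, bco lam j * ((4 * j + 4 : ℕ) : ℂ) * ((4 * j + 3 : ℕ) : ℂ) * z ^ (4 * j + 2)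

lemma e1_bound (α : ℂ) :
    ∀ j, ‖aco α (j + 1) * ((4 * j + 4 : ℕ) : ℂ)‖ ≤
      ((1 * (‖α‖ / 16)) * (4 + (4:ℕ))) * (2 * (‖α‖ / 16)) ^ j / j.factorial :=
  mullin_bound (shift_bound (aco_bound α)) 4

lemma hasDerivAt_Af (α : ℂ) (z : ℂ) : HasDerivAt (Af α) (Adf α z) z := by
  have h := hasDerivAt_series (aco_bound α) 0 z
  have hs := summable_deriv_terms (aco_bound α) 0 z
  have hfun : (fun w => ∑' j, aco α j * w ^ (4 * j + 0)) = Af α := by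
    funext w; simp [Af]
  rw [hfun] at h
  have hval : (∑' j, aco α j * ((4 * j + 0 : ℕ) : ℂ) * z ^ (4 * j + 0 - 1)) = Adf α z := by
    rw [Summable.tsum_eq_zero_add hs]
    have h0 : aco α 0 * ((4 * 0 + 0 : ℕ) : ℂ) * z ^ (4 * 0 + 0 - 1) = 0 := by simp
    rw [h0, zero_add, Adf]
    apply tsum_congr
    intro j
    have e1 : (4 * (j + 1) + 0 : ℕ) = 4 * j + 4 := by omega
    have e2 : (4 * (j + 1) + 0 - 1 : ℕ) = 4 * j + 3 := by omega
    rw [e2, e1]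
  rwa [hval] at h

lemma hasDerivAt_Adf (α : ℂ) (z : ℂ) : HasDerivAt (Adf α) (Addf α z) z := by
  have h := hasDerivAt_series (e1_bound α) 3 z
  have hval : (∑' j, aco α (j + 1) * ((4 * j + 4 : ℕ) : ℂ) * ((4 * j + 3 : ℕ) : ℂ) *
      z ^ (4 * j + 3 - 1)) = Addf α z := by
    rw [Addf]
    apply tsum_congr
    intro j
    have e2 : (4 * j + 3 - 1 : ℕ) = 4 * j + 2 := by omega
    rw [e2]
  rw [← hval]
  exact h

lemma hasDerivAt_Bf (lam : ℂ) (z : ℂ) : HasDerivAt (Bf lam) (Bdf lam z) z := by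
  have h := hasDerivAt_series (bco_bound lam) 4 z
  have hval : (∑' j, bco lam j * ((4 * j + 4 : ℕ) : ℂ) * z ^ (4 * j + 4 - 1)) = Bdf lam z := by
    rw [Bdf]
    apply tsum_congr
    intro j
    have e2 : (4 * j + 4 - 1 : ℕ) = 4 * j + 3 := by omega
    rw [e2]
  rw [← hval]
  exact h

lemma hasDerivAt_Bdf (lam : ℂ) (z : ℂ) : HasDerivAt (Bdf lam) (Bddf lam z) z := by
  have h := hasDerivAt_series (mullin_bound (bco_bound lam) 4) 3 z
  have hval : (∑' j, bco lam j * ((4 * j + 4 : ℕ) : ℂ) * ((4 * j + 3 : ℕ) : ℂ) *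
      z ^ (4 * j + 3 - 1)) = Bddf lam z := by
    rw [Bddf]
    apply tsum_congr
    intro j
    have e2 : (4 * j + 3 - 1 : ℕ) = 4 * j + 2 := by omega
    rw [e2]
  rw [← hval]
  exact h

lemma ode_A (α : ℂ) (z : ℂ) : z * Addf α z + Adf α z = z ^ 3 * α * Af α z := by
  have S2 : Summable (fun j => aco α (j + 1) * ((4 * j + 4 : ℕ) : ℂ) *
      ((4 * j + 3 : ℕ) : ℂ) * z ^ (4 * j + 2)) :=
    summable_terms (mullin_bound (e1_bound α) 3) 2 z
  have S1 : Summable (fun j => aco α (j + 1) * ((4 * j + 4 : ℕ) : ℂ) * z ^ (4 * j + 3)) :=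
    summable_terms (e1_bound α) 3 z
  calc z * Addf α z + Adf α z
      = ∑' j, (z * (aco α (j + 1) * ((4 * j + 4 : ℕ) : ℂ) * ((4 * j + 3 : ℕ) : ℂ) *
          z ^ (4 * j + 2)) + aco α (j + 1) * ((4 * j + 4 : ℕ) : ℂ) * z ^ (4 * j + 3)) := by
        rw [Addf, Adf, ← tsum_mul_left, ← Summable.tsum_add (S2.mul_left z) S1]
    _ = ∑' j, z ^ 3 * α * (aco α j * z ^ (4 * j)) := by
        apply tsum_congr
        intro j
        have h := aco_rec α j
        push_cast
        linear_combination (z ^ (4 * j + 3)) * h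
    _ = z ^ 3 * α * Af α z := by rw [Af, ← tsum_mul_left]

set_option maxHeartbeats 1000000 in
lemma ode_B_step1 (lam : ℂ) (z : ℂ) (SB2 : Summable (fun j => bco lam j * ((4 * j + 4 : ℕ) : ℂ) *
      ((4 * j + 3 : ℕ) : ℂ) * z ^ (4 * j + 2)))
    (SB1 : Summable (fun j => bco lam j * ((4 * j + 4 : ℕ) : ℂ) * z ^ (4 * j + 3)))
    (SA1 : Summable (fun j => aco (lam⁻¹ ^ 2) (j + 1) * ((4 * j + 4 : ℕ) : ℂ) *
      z ^ (4 * j + 3))) :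
    z * Bddf lam z + Bdf lam z + 8 * lam⁻¹ * Adf (lam⁻¹ ^ 2) z
      = ∑' j, (z * (bco lam j * ((4 * j + 4 : ℕ) : ℂ) * ((4 * j + 3 : ℕ) : ℂ) *
            z ^ (4 * j + 2)) +
          bco lam j * ((4 * j + 4 : ℕ) : ℂ) * z ^ (4 * j + 3) +
          8 * lam⁻¹ * (aco (lam⁻¹ ^ 2) (j + 1) * ((4 * j + 4 : ℕ) : ℂ) * z ^ (4 * j + 3))) := by
  rw [Bddf, Bdf, Adf, ← tsum_mul_left, ← tsum_mul_left,
    ← Summable.tsum_add (SB2.mul_left z) SB1, ← Summable.tsum_add ((SB2.mul_left z).add SB1) (SA1.mul_left _)]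

set_option maxHeartbeats 1000000 in
lemma ode_B_step2 (lam : ℂ) (z : ℂ) (Sall : Summable (fun j =>
      z * (bco lam j * ((4 * j + 4 : ℕ) : ℂ) * ((4 * j + 3 : ℕ) : ℂ) * z ^ (4 * j + 2)) +
      bco lam j * ((4 * j + 4 : ℕ) : ℂ) * z ^ (4 * j + 3) +
      8 * lam⁻¹ * (aco (lam⁻¹ ^ 2) (j + 1) * ((4 * j + 4 : ℕ) : ℂ) * z ^ (4 * j + 3)))) :
    (∑' j, (z * (bco lam j * ((4 * j + 4 : ℕ) : ℂ) * ((4 * j + 3 : ℕ) : ℂ) *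
            z ^ (4 * j + 2)) +
          bco lam j * ((4 * j + 4 : ℕ) : ℂ) * z ^ (4 * j + 3) +
          8 * lam⁻¹ * (aco (lam⁻¹ ^ 2) (j + 1) * ((4 * j + 4 : ℕ) : ℂ) * z ^ (4 * j + 3))))
      = ∑' j, z ^ 3 * lam⁻¹ ^ 2 * (bco lam j * z ^ (4 * j + 4)) := by
  rw [Summable.tsum_eq_zero_add Sall]
  have hb0 : bco lam 0 = -2 * lam⁻¹ * aco (lam⁻¹ ^ 2) 1 := by
    simp [bco]
  have h0 : z * (bco lam 0 * ((4 * 0 + 4 : ℕ) : ℂ) * ((4 * 0 + 3 : ℕ) : ℂ) * z ^ (4 * 0 + 2)) +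
      bco lam 0 * ((4 * 0 + 4 : ℕ) : ℂ) * z ^ (4 * 0 + 3) +
      8 * lam⁻¹ * (aco (lam⁻¹ ^ 2) (0 + 1) * ((4 * 0 + 4 : ℕ) : ℂ) * z ^ (4 * 0 + 3)) = 0 := by
    rw [hb0]
    push_cast
    ring
  rw [h0, zero_add]
  apply tsum_congr
  intro j
  have h := bco_rec lam j
  push_cast
  linear_combination (z ^ (4 * j + 7)) * h

set_option maxHeartbeats 1000000 in
lemma ode_B (lam : ℂ) (z : ℂ) :
    z * Bddf lam z + Bdf lam z + 8 * lam⁻¹ * Adf (lam⁻¹ ^ 2) z =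
      z ^ 3 * lam⁻¹ ^ 2 * Bf lam z := by
  have SB2 : Summable (fun j => bco lam j * ((4 * j + 4 : ℕ) : ℂ) *
      ((4 * j + 3 : ℕ) : ℂ) * z ^ (4 * j + 2)) :=
    summable_terms (mullin_bound (mullin_bound (bco_bound lam) 4) 3) 2 z
  have SB1 : Summable (fun j => bco lam j * ((4 * j + 4 : ℕ) : ℂ) * z ^ (4 * j + 3)) :=
    summable_terms (mullin_bound (bco_bound lam) 4) 3 z
  have SA1 : Summable (fun j => aco (lam⁻¹ ^ 2) (j + 1) * ((4 * j + 4 : ℕ) : ℂ) *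
      z ^ (4 * j + 3)) := summable_terms (e1_bound (lam⁻¹ ^ 2)) 3 z
  rw [ode_B_step1 lam z SB2 SB1 SA1, ode_B_step2 lam z
    (((SB2.mul_left z).add SB1).add (SA1.mul_left _)), Bf]
  exact tsum_mul_left

lemma Af_zero (α : ℂ) : Af α 0 = 1 := by
  rw [Af, tsum_eq_single 0]
  · simp [aco]
  · intro b hb
    have : (0:ℂ) ^ (4 * b) = 0 := zero_pow (by omega)
    rw [this, mul_zero]

set_option maxHeartbeats 1000000 in
lemma E_hasDeriv (lam : ℂ) (hlam : lam ≠ 0) (x : ℂ) :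
    HasDerivAt (fun w => Af (lam⁻¹ ^ 2) w * Af (lam⁻¹ ^ 2) w +
      lam / 4 * (w * (Af (lam⁻¹ ^ 2) w * Bdf lam w - Bf lam w * Adf (lam⁻¹ ^ 2) w))) 0 x := by
  have hA := hasDerivAt_Af (lam⁻¹ ^ 2) x
  have hAd := hasDerivAt_Adf (lam⁻¹ ^ 2) x
  have hB := hasDerivAt_Bf lam x
  have hBd := hasDerivAt_Bdf lam x
  have hbuild := (hA.mul hA).add
    ((((hasDerivAt_id x).mul ((hA.mul hBd).sub (hB.mul hAd)))).const_mul (lam / 4))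
  refine hbuild.congr_deriv ?_
  simp only [id_eq, Pi.mul_apply, Pi.sub_apply]
  symm
  have o1 := ode_A (lam⁻¹ ^ 2) x
  have o2 := ode_B lam x
  have hinv : lam * lam⁻¹ = 1 := mul_inv_cancel₀ hlam
  linear_combination (-(lam / 4) * Af (lam⁻¹ ^ 2) x) * o2 +
    ((lam / 4) * Bf lam x) * o1 + (2 * Af (lam⁻¹ ^ 2) x * Adf (lam⁻¹ ^ 2) x) * hinv

set_option maxHeartbeats 1000000 in
lemma E_eq_one (lam : ℂ) (hlam : lam ≠ 0) (z : ℂ) :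
    Af (lam⁻¹ ^ 2) z * Af (lam⁻¹ ^ 2) z +
      lam / 4 * (z * (Af (lam⁻¹ ^ 2) z * Bdf lam z - Bf lam z * Adf (lam⁻¹ ^ 2) z)) = 1 := by
  have hconst := is_const_of_deriv_eq_zero
    (f := fun w => Af (lam⁻¹ ^ 2) w * Af (lam⁻¹ ^ 2) w +
      lam / 4 * (w * (Af (lam⁻¹ ^ 2) w * Bdf lam w - Bf lam w * Adf (lam⁻¹ ^ 2) w)))
    (fun x => (E_hasDeriv lam hlam x).differentiableAt)
    (fun x => (E_hasDeriv lam hlam x).deriv) z 0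
  simp only [Af_zero] at hconst
  rw [hconst]
  ring

end Stmt4Aux

open Stmt4Aux in
/-- For every `λ ∈ ℂ*` and `z ∈ ℂ − (−∞,0]`, the matrix
`L(z,λ) = [[1,0],[λ⁻¹ log(z/2),1]] · [[y₀, λ z y₀'],[y₁/4, y₀ + (λ z/4) y₁']]`
has determinant 1. -/
theorem stmt4 (lam : ℂ) (hlam : lam ≠ 0)
    (y₀ y₁ : ℂ → ℂ)
    (hy₀ : ∀ z : ℂ, y₀ z = ∑' j : ℕ, lam⁻¹ ^ (2 * j) * z ^ (4 * j) /
      (16 ^ j * ((Nat.factorial j : ℂ)) ^ 2))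
    (hy₁ : ∀ z : ℂ, y₁ z = (-2) * lam⁻¹ *
      ∑' j : ℕ, ((harmonic (j + 1) : ℚ) : ℂ) * lam⁻¹ ^ (2 * (j + 1)) * z ^ (4 * (j + 1)) /
        (16 ^ (j + 1) * ((Nat.factorial (j + 1) : ℂ)) ^ 2)) :
    ∀ z : ℂ, z ∈ Complex.slitPlane →
      Matrix.det
        (!![(1 : ℂ), 0; lam⁻¹ * Complex.log (z / 2), 1] *
         !![y₀ z, lam * z * deriv y₀ z;
            (1 / 4) * y₁ z, y₀ z + lam * z * (1 / 4) * deriv y₁ z]) = 1 := by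
  have hy0A : y₀ = Af (lam⁻¹ ^ 2) := by
    funext w
    rw [hy₀ w, Af]
    apply tsum_congr
    intro j
    rw [aco, pow_mul]
    ring
  have hy1B : y₁ = Bf lam := by
    funext w
    rw [hy₁ w, Bf, ← tsum_mul_left]
    apply tsum_congr
    intro j
    simp only [bco, aco]
    rw [pow_mul]
    have e1 : (4 * (j + 1) : ℕ) = 4 * j + 4 := by omega
    rw [e1]
    ring
  subst hy0A hy1B
  intro z _
  have hd0 : deriv (Af (lam⁻¹ ^ 2)) z = Adf (lam⁻¹ ^ 2) z := (hasDerivAt_Af _ z).deriv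
  have hd1 : deriv (Bf lam) z = Bdf lam z := (hasDerivAt_Bf lam z).deriv
  rw [Matrix.det_mul]
  simp only [Matrix.det_fin_two_of, hd0, hd1]
  have hE := E_eq_one lam hlam z
  linear_combination hE
end

section
/- Conversely: if g(λ) = conj(φ(1/conj(λ)))^T diag(1,−1) φ(λ) admits a Birkhoff factorization g = B_− diag(1,−1) B_+ with B_± ∈ (Λ^± SL_2ℂ)_σ and B_+ ∈ (Λ^{+,>0} SL_2ℂ)_σ, then conj(B_+(1/conj(λ)))^T = B_−(λ) Θ for a constant diagonal matrix Θ = diag(k, k^{-1}) with k ∈ ℝ, k ≠ 0. -/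
open Complex Matrix Metric

attribute [local instance] Matrix.normedAddCommGroup Matrix.normedSpace

noncomputable section StmtNineAux

/-- derivative of the conjugate-reflected function -/
lemma stmt9_hasDerivAt_conj_reflect {g : ℂ → ℂ} {z d : ℂ}
    (h : HasDerivAt g d ((starRingEnd ℂ) z)) :
    HasDerivAt (fun w => (starRingEnd ℂ) (g ((starRingEnd ℂ) w))) ((starRingEnd ℂ) d) z := by
  rw [hasDerivAt_iff_tendsto_slope] at h ⊢
  have hconj : Filter.Tendsto (starRingEnd ℂ) (nhdsWithin z {z}ᶜ)
      (nhdsWithin ((starRingEnd ℂ) z) {(starRingEnd ℂ) z}ᶜ) := by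
    refine tendsto_nhdsWithin_iff.mpr
      ⟨(Complex.continuous_conj.tendsto z).mono_left nhdsWithin_le_nhds, ?_⟩
    filter_upwards [self_mem_nhdsWithin] with w hw
    exact fun hc => hw (by simpa using (starRingEnd ℂ).injective hc)
  have h2 := ((Complex.continuous_conj.tendsto d).comp (h.comp hconj))
  refine h2.congr (fun w => ?_)
  simp only [Function.comp_apply, slope_def_field]
  rw [map_div₀, map_sub, map_sub]; simp

lemma stmt9_diffContOnCl_conj_reflect {g : ℂ → ℂ}
    (hg : DiffContOnCl ℂ g (ball (0:ℂ) 1)) :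
    DiffContOnCl ℂ (fun z => (starRingEnd ℂ) (g ((starRingEnd ℂ) z))) (ball (0:ℂ) 1) := by
  constructor
  · intro z hz
    have hz' : (starRingEnd ℂ) z ∈ ball (0:ℂ) 1 := by
      simpa [mem_ball_zero_iff] using hz
    have hd : DifferentiableAt ℂ g ((starRingEnd ℂ) z) :=
      hg.differentiableAt isOpen_ball hz'
    exact (stmt9_hasDerivAt_conj_reflect hd.hasDerivAt).differentiableAt.differentiableWithinAt
  · rw [closure_ball (0:ℂ) one_ne_zero]
    have hc : ContinuousOn g (closedBall (0:ℂ) 1) := by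
      have := hg.continuousOn
      rwa [closure_ball (0:ℂ) one_ne_zero] at this
    refine Complex.continuous_conj.comp_continuousOn ?_
    refine hc.comp Complex.continuous_conj.continuousOn ?_
    intro z hz
    simpa [mem_closedBall_zero_iff] using hz

lemma stmt9_intervalIntegral_conj {f : ℝ → ℂ} {a b : ℝ} :
    (∫ x in a..b, (starRingEnd ℂ) (f x)) = (starRingEnd ℂ) (∫ x in a..b, f x) := by
  unfold intervalIntegral
  rw [integral_conj, integral_conj, ← map_sub]

/-- Key analytic lemma. If `u` and `w` are holomorphic on the unit disk, continuous up to the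
boundary, and `u = conj w` on the unit circle, then `u` is constant on the closed disk. -/
lemma stmt9_const_of_boundary_conj {u w : ℂ → ℂ}
    (hu : DiffContOnCl ℂ u (ball (0:ℂ) 1)) (hw : DiffContOnCl ℂ w (ball (0:ℂ) 1))
    (h : ∀ z ∈ sphere (0:ℂ) 1, u z = (starRingEnd ℂ) (w z)) :
    ∀ z ∈ closedBall (0:ℂ) 1, u z = u 0 := by
  have huc : ContinuousOn u (closedBall (0:ℂ) 1) := by
    have := hu.continuousOn; rwa [closure_ball (0:ℂ) one_ne_zero] at this
  have hwc : ContinuousOn w (closedBall (0:ℂ) 1) := by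
    have := hw.continuousOn; rwa [closure_ball (0:ℂ) one_ne_zero] at this
  -- the Cauchy coefficients of u of order ≥ 1 vanish
  have key : ∀ n : ℕ, n ≠ 0 →
      (∮ z in C(0, 1), (z - 0)⁻¹ ^ n • ((z - 0)⁻¹ • u z)) = 0 := by
    intro n hn
    have hA : (∮ z in C(0, 1), z ^ (n - 1) • w z) = 0 := by
      refine Complex.circleIntegral_eq_zero_of_differentiable_on_off_countable zero_le_one
        Set.countable_empty ((continuous_pow _).continuousOn.smul hwc) (fun z hz => ?_)
      exact (differentiableAt_pow _).smul (hw.differentiableAt isOpen_ball hz.1)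
    have hpt : ∀ θ : ℝ, deriv (circleMap 0 1) θ •
        ((circleMap 0 1 θ - 0)⁻¹ ^ n • ((circleMap 0 1 θ - 0)⁻¹ • u (circleMap 0 1 θ))) =
        (starRingEnd ℂ) (-(deriv (circleMap 0 1) θ •
          ((circleMap 0 1 θ) ^ (n - 1) • w (circleMap 0 1 θ)))) := by
      intro θ
      have hsph : circleMap 0 1 θ ∈ sphere (0:ℂ) 1 :=
        circleMap_mem_sphere (0:ℂ) zero_le_one θ
      set e := circleMap 0 1 θ with he
      have hne : e ≠ 0 := circleMap_ne_center one_ne_zero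
      have hnorm : ‖e‖ = 1 := mem_sphere_zero_iff_norm.mp hsph
      have hinv : e⁻¹ = (starRingEnd ℂ) e := RCLike.inv_eq_conj hnorm
      have hderiv : deriv (circleMap 0 1) θ = e * Complex.I := by
        rw [deriv_circleMap]
      have hu' : u e = (starRingEnd ℂ) (w e) := h e hsph
      have hpow : e ^ (n - 1) * e = e ^ n := by
        rw [← pow_succ, Nat.sub_add_cancel (Nat.one_le_iff_ne_zero.mpr hn)]
      simp only [smul_eq_mul, sub_zero, hderiv, hu', _root_.map_neg, _root_.map_mul, _root_.map_pow,
        Complex.conj_conj, Complex.conj_I, ← hinv]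
      field_simp
      rw [show (1 / e) ^ n = (1 / e) ^ (n - 1) * (1 / e) by
        rw [← pow_succ, Nat.sub_add_cancel (Nat.one_le_iff_ne_zero.mpr hn)]]
      linear_combination ((starRingEnd ℂ) (w e) * (1 / e) ^ (n - 1)) * mul_one_div_cancel hne
    calc (∮ z in C(0, 1), (z - 0)⁻¹ ^ n • ((z - 0)⁻¹ • u z))
        = ∫ θ in (0:ℝ)..2 * Real.pi, (starRingEnd ℂ) (-(deriv (circleMap 0 1) θ •
            ((circleMap 0 1 θ) ^ (n - 1) • w (circleMap 0 1 θ)))) := by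
          rw [circleIntegral]
          exact intervalIntegral.integral_congr (fun θ _ => hpt θ)
      _ = (starRingEnd ℂ) (∫ θ in (0:ℝ)..2 * Real.pi, -(deriv (circleMap 0 1) θ •
            ((circleMap 0 1 θ) ^ (n - 1) • w (circleMap 0 1 θ)))) := stmt9_intervalIntegral_conj
      _ = (starRingEnd ℂ) (-(∫ θ in (0:ℝ)..2 * Real.pi, deriv (circleMap 0 1) θ •
            ((circleMap 0 1 θ) ^ (n - 1) • w (circleMap 0 1 θ)))) := by
          rw [intervalIntegral.integral_neg]
      _ = (starRingEnd ℂ) (-(∮ z in C(0, 1), z ^ (n - 1) • w z)) := by rw [circleIntegral]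
      _ = 0 := by rw [hA, neg_zero, map_zero]
  have hps : HasFPowerSeriesOnBall u (cauchyPowerSeries u 0 1) 0 1 := by
    have := DiffContOnCl.hasFPowerSeriesOnBall (R := 1) (f := u) (c := 0)
      (by simpa using hu) one_pos
    simpa using this
  have hball : ∀ y ∈ ball (0:ℂ) 1, u y = u 0 := by
    have hcoef : ∀ y : ℂ, ∀ n : ℕ, n ≠ 0 → (cauchyPowerSeries u 0 1 n fun _ => y) = 0 := by
      intro y n hn
      have hdef : cauchyPowerSeries u 0 1 n = ContinuousMultilinearMap.mkPiRing ℂ (Fin n)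
          ((2 * Real.pi * Complex.I : ℂ)⁻¹ •
            ∮ z in C(0, 1), (z - 0)⁻¹ ^ n • ((z - 0)⁻¹ • u z)) := rfl
      rw [hdef, key n hn, smul_zero]
      simp
    have hval : ∀ y ∈ ball (0:ℂ) 1, u y = (cauchyPowerSeries u 0 1 0 fun _ => y) := by
      intro y hy
      have hylt : ‖y‖ < 1 := mem_ball_zero_iff.mp hy
      have hmem : y ∈ Metric.eball (0:ℂ) 1 := by
        rw [Metric.mem_eball, edist_zero_right, enorm_eq_nnnorm]
        exact_mod_cast hylt
      have hsum := hps.hasSum hmem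
      have := hsum.unique (hasSum_single 0 (fun n hn => hcoef y n hn))
      rwa [zero_add] at this
    intro y hy
    rw [hval y hy, hval 0 (by simp)]
    congr 1
    exact Subsingleton.elim _ _
  intro z hz
  by_cases hzb : z ∈ ball (0:ℂ) 1
  · exact hball z hzb
  have hcl : z ∈ closure (ball (0:ℂ) 1) := by rwa [closure_ball (0:ℂ) one_ne_zero]
  have hnb : (nhdsWithin z (ball (0:ℂ) 1)).NeBot := mem_closure_iff_nhdsWithin_neBot.mp hcl
  have h1 : Filter.Tendsto u (nhdsWithin z (ball (0:ℂ) 1)) (nhds (u z)) :=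
    (hu.continuousOn z hcl).mono_left (nhdsWithin_mono z subset_closure)
  have h2 : Filter.Tendsto u (nhdsWithin z (ball (0:ℂ) 1)) (nhds (u 0)) := by
    refine Filter.Tendsto.congr' ?_ tendsto_const_nhds
    filter_upwards [self_mem_nhdsWithin] with y hy
    exact (hball y hy).symm
  exact tendsto_nhds_unique h1 h2

/-- multiplication of DiffContOnCl scalar functions -/
lemma stmt9_DCOC_mul {f g : ℂ → ℂ} (hf : DiffContOnCl ℂ f (ball (0:ℂ) 1))
    (hg : DiffContOnCl ℂ g (ball (0:ℂ) 1)) :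
    DiffContOnCl ℂ (fun z => f z * g z) (ball (0:ℂ) 1) :=
  ⟨hf.1.mul hg.1, hf.2.mul hg.2⟩

lemma stmt9_DCOC_add {f g : ℂ → ℂ} (hf : DiffContOnCl ℂ f (ball (0:ℂ) 1))
    (hg : DiffContOnCl ℂ g (ball (0:ℂ) 1)) :
    DiffContOnCl ℂ (fun z => f z + g z) (ball (0:ℂ) 1) :=
  ⟨hf.1.add hg.1, hf.2.add hg.2⟩

lemma stmt9_DCOC_neg {f : ℂ → ℂ} (hf : DiffContOnCl ℂ f (ball (0:ℂ) 1)) :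
    DiffContOnCl ℂ (fun z => -f z) (ball (0:ℂ) 1) :=
  ⟨hf.1.neg, hf.2.neg⟩

/-- entries of a product of matrix-valued functions -/
lemma stmt9_entryDC_mul {A B : ℂ → Matrix (Fin 2) (Fin 2) ℂ}
    (hA : ∀ i j, DiffContOnCl ℂ (fun z => A z i j) (ball (0:ℂ) 1))
    (hB : ∀ i j, DiffContOnCl ℂ (fun z => B z i j) (ball (0:ℂ) 1)) :
    ∀ i j, DiffContOnCl ℂ (fun z => (A z * B z) i j) (ball (0:ℂ) 1) := by
  intro i j
  have hrw : (fun z => (A z * B z) i j) =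
      fun z => A z i 0 * B z 0 j + A z i 1 * B z 1 j := by
    funext z; rw [Matrix.mul_apply, Fin.sum_univ_two]
  rw [hrw]
  exact stmt9_DCOC_add (stmt9_DCOC_mul (hA i 0) (hB 0 j)) (stmt9_DCOC_mul (hA i 1) (hB 1 j))

/-- entries of the adjugate of a matrix-valued function -/
lemma stmt9_entryDC_adj {A : ℂ → Matrix (Fin 2) (Fin 2) ℂ}
    (hA : ∀ i j, DiffContOnCl ℂ (fun z => A z i j) (ball (0:ℂ) 1)) :
    ∀ i j, DiffContOnCl ℂ (fun z => (Matrix.adjugate (A z)) i j) (ball (0:ℂ) 1) := by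
  have h : ∀ z, Matrix.adjugate (A z) = !![A z 1 1, -A z 0 1; -A z 1 0, A z 0 0] :=
    fun z => Matrix.adjugate_fin_two (A z)
  intro i j
  fin_cases i <;> fin_cases j <;> simp only [h, Matrix.cons_val', Matrix.cons_val_zero,
    Matrix.cons_val_one, Matrix.head_cons, Matrix.empty_val', Matrix.cons_val_fin_one,
    Matrix.head_fin_const, Fin.isValue]
  · exact hA 1 1
  · exact stmt9_DCOC_neg (hA 0 1)
  · exact stmt9_DCOC_neg (hA 1 0)
  · exact hA 0 0

lemma stmt9_entryDC_const (M : Matrix (Fin 2) (Fin 2) ℂ) :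
    ∀ i j, DiffContOnCl ℂ (fun _ : ℂ => M i j) (ball (0:ℂ) 1) :=
  fun _ _ => diffContOnCl_const

/-- cancellation of invertible factors -/
lemma stmt9_cancel {A P Q B : Matrix (Fin 2) (Fin 2) ℂ} (hA : Matrix.det A = 1)
    (hB : Matrix.det B = 1) (h : A * P * B = A * Q * B) : P = Q := by
  calc P = (Matrix.adjugate A * A) * P * (B * Matrix.adjugate B) := by
        rw [Matrix.adjugate_mul, Matrix.mul_adjugate, hA, hB, one_smul, Matrix.one_mul,
          Matrix.mul_one]
    _ = Matrix.adjugate A * (A * P * B) * Matrix.adjugate B := by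
        simp only [Matrix.mul_assoc]
    _ = Matrix.adjugate A * (A * Q * B) * Matrix.adjugate B := by rw [h]
    _ = (Matrix.adjugate A * A) * Q * (B * Matrix.adjugate B) := by
        simp only [Matrix.mul_assoc]
    _ = Q := by
        rw [Matrix.adjugate_mul, Matrix.mul_adjugate, hA, hB, one_smul, Matrix.one_mul,
          Matrix.mul_one]

end StmtNineAux

/-- the reflected negative factor -/
noncomputable def stmt9Q (Bm : ℂ → Matrix (Fin 2) (Fin 2) ℂ) : ℂ → Matrix (Fin 2) (Fin 2) ℂ :=
  fun z => (Bm (((starRingEnd ℂ) z)⁻¹))ᴴ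

/-- the function holomorphic inside the disk -/
noncomputable def stmt9F (J : Matrix (Fin 2) (Fin 2) ℂ) (Bp Bm : ℂ → Matrix (Fin 2) (Fin 2) ℂ) :
    ℂ → Matrix (Fin 2) (Fin 2) ℂ :=
  fun z => J * Bp z * Matrix.adjugate (stmt9Q Bm z) * J

/-- the conjugate-reflection of the function holomorphic outside the disk -/
noncomputable def stmt9W (Bp Bm : ℂ → Matrix (Fin 2) (Fin 2) ℂ) : ℂ → Matrix (Fin 2) (Fin 2) ℂ :=
  fun z => Matrix.adjugate ((stmt9Q Bm z)ᵀ) * (Bp z)ᵀ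

/-- Converse direction: if `g(λ) = conj(φ(1/conj λ))ᵀ diag(1,−1) φ(λ)` admits a Birkhoff
factorization `g = B₋ diag(1,−1) B₊` with `B₊ ∈ (Λ^{+,>0} SL₂ℂ)_σ` and
`B₋ ∈ (Λ⁻ SL₂ℂ)_σ`, then `conj(B₊(1/conj λ))ᵀ = B₋(λ) Θ` for a constant diagonal
matrix `Θ = diag(k, k⁻¹)` with `k ∈ ℝ`, `k ≠ 0`. -/
theorem stmt9
    (J : Matrix (Fin 2) (Fin 2) ℂ) (hJ : J = !![(1 : ℂ), 0; 0, -1])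
    (φ Bp Bm : ℂ → Matrix (Fin 2) (Fin 2) ℂ)
    -- φ ∈ (Λ SL₂ℂ)_σ
    (hφtw : ∀ lam ∈ sphere (0 : ℂ) 1, φ (-lam) = J * φ lam * J)
    (hφdet : ∀ lam ∈ sphere (0 : ℂ) 1, det (φ lam) = 1)
    -- B₊ ∈ (Λ^{+,>0} SL₂ℂ)_σ
    (hBptw : ∀ lam ∈ closedBall (0 : ℂ) 1, -lam ∈ closedBall (0 : ℂ) 1 →
      Bp (-lam) = J * Bp lam * J)
    (hBphol : ContinuousOn Bp (closedBall (0 : ℂ) 1) ∧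
      DifferentiableOn ℂ Bp (ball (0 : ℂ) 1))
    (hBpdet : ∀ lam ∈ closedBall (0 : ℂ) 1, det (Bp lam) = 1)
    (hBp0 : ∃ ρ : ℝ, 0 < ρ ∧ Bp 0 = !![(ρ : ℂ), 0; 0, (ρ : ℂ)⁻¹])
    -- B₋ ∈ (Λ⁻ SL₂ℂ)_σ : λ ↦ B₋(λ⁻¹) extends holomorphically to the disk
    (hBmtw : ∀ lam ∈ sphere (0 : ℂ) 1, Bm (-lam) = J * Bm lam * J)
    (hBmhol : ContinuousOn (fun lam => Bm lam⁻¹) (closedBall (0 : ℂ) 1) ∧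
      DifferentiableOn ℂ (fun lam => Bm lam⁻¹) (ball (0 : ℂ) 1))
    (hBmdet : ∀ lam ∈ sphere (0 : ℂ) 1, det (Bm lam) = 1)
    -- the Birkhoff factorization of g
    (hfact : ∀ lam ∈ sphere (0 : ℂ) 1,
      (φ ((starRingEnd ℂ lam)⁻¹))ᴴ * J * φ lam = Bm lam * J * Bp lam) :
    ∃ k : ℝ, k ≠ 0 ∧ ∀ lam ∈ sphere (0 : ℂ) 1,
      (Bp ((starRingEnd ℂ lam)⁻¹))ᴴ = Bm lam * !![(k : ℂ), 0; 0, (k : ℂ)⁻¹] := by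
  -- facts about J
  have hJH : Jᴴ = J := by
    rw [hJ]; ext i j; fin_cases i <;> fin_cases j <;> simp [Matrix.conjTranspose_apply]
  have hJ2 : J * J = 1 := by
    rw [hJ]; ext i j; fin_cases i <;> fin_cases j <;>
      simp [Matrix.mul_apply, Fin.sum_univ_two, Matrix.one_apply]
  have hadjJ : adjugate J = -J := by
    rw [hJ, Matrix.adjugate_fin_two]; ext i j; fin_cases i <;> fin_cases j <;> simp
  have hJ00 : J 0 0 = 1 := by rw [hJ]; simp
  have hJ01 : J 0 1 = 0 := by rw [hJ]; simp
  have hJ10 : J 1 0 = 0 := by rw [hJ]; simp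
  have hJ11 : J 1 1 = -1 := by rw [hJ]; simp
  -- circle facts
  have hcinv : ∀ z ∈ sphere (0:ℂ) 1, ((starRingEnd ℂ) z)⁻¹ = z := by
    intro z hz
    rw [← RCLike.inv_eq_conj (mem_sphere_zero_iff_norm.mp hz), inv_inv]
  have h1s : (1:ℂ) ∈ sphere (0:ℂ) 1 := by simp
  have hm1s : (-1:ℂ) ∈ sphere (0:ℂ) 1 := by simp
  have h1c : (1:ℂ) ∈ closedBall (0:ℂ) 1 := by simp
  have hm1c : (-1:ℂ) ∈ closedBall (0:ℂ) 1 := by simp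
  -- entry regularity
  have hpb : ∀ i j : Fin 2, DiffContOnCl ℂ (fun z => Bp z i j) (ball (0:ℂ) 1) := by
    intro i j
    constructor
    · exact differentiableOn_pi.mp (differentiableOn_pi.mp hBphol.2 i) j
    · rw [closure_ball (0:ℂ) one_ne_zero]
      exact ((continuous_apply j).comp (continuous_apply i)).comp_continuousOn hBphol.1
  have hmm : ∀ i j : Fin 2, DiffContOnCl ℂ (fun z => Bm z⁻¹ i j) (ball (0:ℂ) 1) := by
    intro i j
    constructor
    · exact differentiableOn_pi.mp (differentiableOn_pi.mp hBmhol.2 i) j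
    · rw [closure_ball (0:ℂ) one_ne_zero]
      exact ((continuous_apply j).comp (continuous_apply i)).comp_continuousOn hBmhol.1
  have hQe : ∀ i j : Fin 2, DiffContOnCl ℂ (fun z => stmt9Q Bm z i j) (ball (0:ℂ) 1) := by
    intro i j
    have hrw : (fun z => stmt9Q Bm z i j) =
        fun z => (starRingEnd ℂ) ((fun w => Bm w⁻¹ j i) ((starRingEnd ℂ) z)) := by
      funext z
      simp only [stmt9Q, Matrix.conjTranspose_apply, RCLike.star_def]
    rw [hrw]
    exact stmt9_diffContOnCl_conj_reflect (hmm j i)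
  have hQTe : ∀ i j : Fin 2, DiffContOnCl ℂ (fun z => (stmt9Q Bm z)ᵀ i j) (ball (0:ℂ) 1) := by
    intro i j
    have hrw : (fun z => (stmt9Q Bm z)ᵀ i j) = fun z => stmt9Q Bm z j i := by
      funext z; rw [Matrix.transpose_apply]
    rw [hrw]; exact hQe j i
  have hBpTe : ∀ i j : Fin 2, DiffContOnCl ℂ (fun z => (Bp z)ᵀ i j) (ball (0:ℂ) 1) := by
    intro i j
    have hrw : (fun z => (Bp z)ᵀ i j) = fun z => Bp z j i := by
      funext z; rw [Matrix.transpose_apply]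
    rw [hrw]; exact hpb j i
  have hFe : ∀ i j : Fin 2, DiffContOnCl ℂ (fun z => stmt9F J Bp Bm z i j) (ball (0:ℂ) 1) := by
    intro i j
    have hrw : (fun z => stmt9F J Bp Bm z i j) =
        fun z => ((J * Bp z * Matrix.adjugate (stmt9Q Bm z)) * J) i j := rfl
    rw [hrw]
    exact stmt9_entryDC_mul (stmt9_entryDC_mul (stmt9_entryDC_mul (stmt9_entryDC_const J) hpb)
      (stmt9_entryDC_adj hQe)) (stmt9_entryDC_const J) i j
  have hWe : ∀ i j : Fin 2, DiffContOnCl ℂ (fun z => stmt9W Bp Bm z i j) (ball (0:ℂ) 1) := by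
    intro i j
    have hrw : (fun z => stmt9W Bp Bm z i j) =
        fun z => (Matrix.adjugate ((stmt9Q Bm z)ᵀ) * (Bp z)ᵀ) i j := rfl
    rw [hrw]
    exact stmt9_entryDC_mul (stmt9_entryDC_adj hQTe) hBpTe i j
  -- determinant facts
  have hdetBmH : ∀ z ∈ sphere (0:ℂ) 1, det ((Bm z)ᴴ) = 1 := by
    intro z hz; rw [Matrix.det_conjTranspose, hBmdet z hz]; simp
  -- symmetry of g
  have hsym : ∀ z ∈ sphere (0:ℂ) 1,
      Bm z * (J * Bp z) = (Bp z)ᴴ * (J * (Bm z)ᴴ) := by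
    intro z hz
    have h1 := hfact z hz
    rw [hcinv z hz] at h1
    have h2 := congrArg Matrix.conjTranspose h1
    simp only [Matrix.conjTranspose_mul, Matrix.conjTranspose_conjTranspose, hJH,
      Matrix.mul_assoc] at h1 h2
    rw [← h1]
    exact h2
  -- on the circle, F equals C := adjugate Bm * Bpᴴ
  have hQz : ∀ z ∈ sphere (0:ℂ) 1, stmt9Q Bm z = (Bm z)ᴴ := by
    intro z hz
    show (Bm (((starRingEnd ℂ) z)⁻¹))ᴴ = (Bm z)ᴴ
    rw [hcinv z hz]
  have hFC : ∀ z ∈ sphere (0:ℂ) 1,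
      stmt9F J Bp Bm z = Matrix.adjugate (Bm z) * (Bp z)ᴴ := by
    intro z hz
    have hdm := hBmdet z hz
    have hdmH := hdetBmH z hz
    have hs := hsym z hz
    have e1 : Matrix.adjugate (Bm z) * (Bp z)ᴴ * J = J * (Bp z * Matrix.adjugate ((Bm z)ᴴ)) := by
      calc Matrix.adjugate (Bm z) * (Bp z)ᴴ * J
          = Matrix.adjugate (Bm z) *
              ((Bp z)ᴴ * (J * ((Bm z)ᴴ * Matrix.adjugate ((Bm z)ᴴ)))) := by
            rw [Matrix.mul_adjugate, hdmH, one_smul, Matrix.mul_one]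
            simp only [Matrix.mul_assoc]
        _ = Matrix.adjugate (Bm z) * ((Bp z)ᴴ * (J * (Bm z)ᴴ)) * Matrix.adjugate ((Bm z)ᴴ) := by
            simp only [Matrix.mul_assoc]
        _ = Matrix.adjugate (Bm z) * (Bm z * (J * Bp z)) * Matrix.adjugate ((Bm z)ᴴ) := by
            rw [← hs]
        _ = (Matrix.adjugate (Bm z) * Bm z) * (J * (Bp z * Matrix.adjugate ((Bm z)ᴴ))) := by
            simp only [Matrix.mul_assoc]
        _ = J * (Bp z * Matrix.adjugate ((Bm z)ᴴ)) := by
            rw [Matrix.adjugate_mul, hdm, one_smul, Matrix.one_mul]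
    have e2 : stmt9F J Bp Bm z = Matrix.adjugate (Bm z) * (Bp z)ᴴ * J * J := by
      show J * Bp z * Matrix.adjugate (stmt9Q Bm z) * J = _
      rw [hQz z hz, e1]
      simp only [Matrix.mul_assoc]
    rw [e2, Matrix.mul_assoc (Matrix.adjugate (Bm z) * (Bp z)ᴴ) J J, hJ2, Matrix.mul_one]
  -- on the circle, F = conj ∘ W entrywise
  have hWC : ∀ z ∈ sphere (0:ℂ) 1, ∀ i j : Fin 2,
      stmt9F J Bp Bm z i j = (starRingEnd ℂ) (stmt9W Bp Bm z i j) := by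
    intro z hz i j
    rw [hFC z hz]
    have hWz : stmt9W Bp Bm z = Matrix.adjugate (((Bm z)ᴴ)ᵀ) * (Bp z)ᵀ := by
      show Matrix.adjugate ((stmt9Q Bm z)ᵀ) * (Bp z)ᵀ = _
      rw [hQz z hz]
    rw [hWz]
    fin_cases i <;> fin_cases j <;>
      simp [Matrix.mul_apply, Fin.sum_univ_two, Matrix.adjugate_fin_two,
        Matrix.conjTranspose_apply, Matrix.transpose_apply, _root_.map_add, _root_.map_mul, _root_.map_neg] <;>
      ring
  -- constancy of F on the closed disk
  have hconst : ∀ i j : Fin 2, ∀ y ∈ closedBall (0:ℂ) 1,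
      stmt9F J Bp Bm y i j = stmt9F J Bp Bm 0 i j := fun i j =>
    stmt9_const_of_boundary_conj (hFe i j) (hWe i j) (fun z hz => hWC z hz i j)
  -- hence C is constant on the circle
  have hCconst : ∀ z ∈ sphere (0:ℂ) 1,
      Matrix.adjugate (Bm z) * (Bp z)ᴴ = Matrix.adjugate (Bm 1) * (Bp 1)ᴴ := by
    intro z hz
    rw [← hFC z hz, ← hFC 1 h1s]
    ext i j
    rw [hconst i j z (sphere_subset_closedBall hz), hconst i j 1 (sphere_subset_closedBall h1s)]
  set Θ : Matrix (Fin 2) (Fin 2) ℂ := Matrix.adjugate (Bm 1) * (Bp 1)ᴴ with hΘdef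
  -- the factorization identity
  have hBpH : ∀ z ∈ sphere (0:ℂ) 1, (Bp z)ᴴ = Bm z * Θ := by
    intro z hz
    calc (Bp z)ᴴ = (Bm z * Matrix.adjugate (Bm z)) * (Bp z)ᴴ := by
          rw [Matrix.mul_adjugate, hBmdet z hz, one_smul, Matrix.one_mul]
      _ = Bm z * (Matrix.adjugate (Bm z) * (Bp z)ᴴ) := by rw [Matrix.mul_assoc]
      _ = Bm z * Θ := by rw [hCconst z hz]
  -- twisting gives that Θ is diagonal
  have hΘJ : Θ = J * Θ * J := by
    have h1 : Θ = Matrix.adjugate (Bm (-1)) * (Bp (-1))ᴴ := (hCconst (-1) hm1s).symm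
    rw [hBmtw 1 h1s, hBptw 1 h1c hm1c] at h1
    have hadj : Matrix.adjugate (J * Bm 1 * J) = J * (Matrix.adjugate (Bm 1) * J) := by
      rw [Matrix.adjugate_mul_distrib, Matrix.adjugate_mul_distrib, hadjJ]
      simp only [Matrix.neg_mul, Matrix.mul_neg, neg_neg]
    have hct : (J * Bp 1 * J)ᴴ = J * ((Bp 1)ᴴ * J) := by
      rw [Matrix.conjTranspose_mul, Matrix.conjTranspose_mul, hJH]
    rw [hadj, hct] at h1
    refine h1.trans ?_
    calc (J * (Matrix.adjugate (Bm 1) * J)) * (J * ((Bp 1)ᴴ * J))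
        = J * (Matrix.adjugate (Bm 1) * ((J * J) * ((Bp 1)ᴴ * J))) := by
          simp only [Matrix.mul_assoc]
      _ = J * (Matrix.adjugate (Bm 1) * ((Bp 1)ᴴ * J)) := by rw [hJ2, Matrix.one_mul]
      _ = J * Θ * J := by rw [hΘdef]; simp only [Matrix.mul_assoc]
  have hΘ01 : Θ 0 1 = 0 := by
    have h := congrFun (congrFun hΘJ 0) 1
    simp only [Matrix.mul_apply, Fin.sum_univ_two, hJ00, hJ01, hJ10, hJ11] at h
    ring_nf at h
    linear_combination h / 2
  have hΘ10 : Θ 1 0 = 0 := by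
    have h := congrFun (congrFun hΘJ 1) 0
    simp only [Matrix.mul_apply, Fin.sum_univ_two, hJ00, hJ01, hJ10, hJ11] at h
    ring_nf at h
    linear_combination h / 2
  -- determinant of Θ
  have hdetΘ : det Θ = 1 := by
    rw [hΘdef, Matrix.det_mul, Matrix.det_adjugate, Matrix.det_conjTranspose,
      hBmdet 1 h1s, hBpdet 1 h1c]
    simp
  have had : Θ 0 0 * Θ 1 1 = 1 := by
    have h := hdetΘ
    rw [Matrix.det_fin_two, hΘ01, hΘ10] at h
    linear_combination h
  -- reality of Θ
  have hBp1 : Bp 1 = Θᴴ * (Bm 1)ᴴ := by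
    have h := congrArg Matrix.conjTranspose (hBpH 1 h1s)
    rwa [Matrix.conjTranspose_conjTranspose, Matrix.conjTranspose_mul] at h
  have hJΘ : J * Θᴴ = Θ * J := by
    have hs := hsym 1 h1s
    rw [hBpH 1 h1s, hBp1] at hs
    refine stmt9_cancel (hBmdet 1 h1s) (hdetBmH 1 h1s) ?_
    calc Bm 1 * (J * Θᴴ) * (Bm 1)ᴴ
        = Bm 1 * (J * (Θᴴ * (Bm 1)ᴴ)) := by simp only [Matrix.mul_assoc]
      _ = (Bm 1 * Θ) * (J * (Bm 1)ᴴ) := hs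
      _ = Bm 1 * (Θ * J) * (Bm 1)ᴴ := by simp only [Matrix.mul_assoc]
  have ha : (starRingEnd ℂ) (Θ 0 0) = Θ 0 0 := by
    have h := congrFun (congrFun hJΘ 0) 0
    simpa [Matrix.mul_apply, Fin.sum_univ_two, Matrix.conjTranspose_apply,
      hJ00, hJ01, hJ10, hJ11, hΘ01, hΘ10] using h
  have haIm : (Θ 0 0).im = 0 := Complex.conj_eq_iff_im.mp ha
  refine ⟨(Θ 0 0).re, ?_, ?_⟩
  · intro h0
    have hzero : Θ 0 0 = 0 := by
      apply Complex.ext <;> simp [h0, haIm]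
    rw [hzero, zero_mul] at had
    exact zero_ne_one had
  · have hka : ((Θ 0 0).re : ℂ) = Θ 0 0 := by
      apply Complex.ext <;> simp [haIm]
    have hane : Θ 0 0 ≠ 0 := by
      intro h0; rw [h0, zero_mul] at had; exact zero_ne_one had
    have hd : Θ 1 1 = (Θ 0 0)⁻¹ := by
      have h := congrArg (fun x => (Θ 0 0)⁻¹ * x) had
      simpa [← mul_assoc, inv_mul_cancel₀ hane] using h
    have hΘform : Θ = !![((Θ 0 0).re : ℂ), 0; 0, (((Θ 0 0).re : ℂ))⁻¹] := by
      ext i j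
      fin_cases i <;> fin_cases j <;> simp [hΘ01, hΘ10, hd, hka]
    intro lam hlam
    rw [hcinv lam hlam, hBpH lam hlam, ← hΘform]
end
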